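/- arXiv:2105.09184 — 3 statements merged into one kernel-verified Lean document; each statement's English description precedes it below -/
import Mathlib

section
/- Consider so(n) with basis vectors ξ_{ab} = E_{ab} - E_{ba}, and the subspaces m_{12} = span{ξ_{12}}, m_{13} = span{ξ_{13}, ..., ξ_{1n}}, m_{23} = span{ξ_{23}, ..., ξ_{2n}} of the tangent space of the Stiefel manifold V_2 R^n = SO(n)/SO(n-2). A vector X = a_{12}ξ_{12} + Σ_{j=3}^n a_{1j}ξ_{1j} + Σ_{j=3}^n a_{2j}ξ_{2j} satisfies [X_{12}, X_{13}]_m = [X_{12}, X_{23}]_m = [X_{13}, X_{23}]_m = 0 (projection onto m = m_{12} ⊕ m_{13} ⊕ m_{23} along so(n-2)) if and only if a_{12}a_{1j} = 0 and a_{12}a_{2j} = 0 for all 3 ≤ j ≤ n, and Σ_{j=3}^n a_{1j}a_{2j} = 0. -/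
open Matrix

/-- `ξ a b = E_{ab} - E_{ba}` in the n×n real matrices. -/
noncomputable def xiM {n : ℕ} (a b : Fin n) : Matrix (Fin n) (Fin n) ℝ :=
  Matrix.single a b 1 - Matrix.single b a 1

/-- Projection of `so(n)` onto `m` (entries with a row or column index in `{1,2}`,
0-based `{0,1}`) along `so(n-2)` (entries supported in rows and columns `3,…,n`). -/
noncomputable def projV (n : ℕ) (A : Matrix (Fin n) (Fin n) ℝ) :
    Matrix (Fin n) (Fin n) ℝ :=
  Matrix.of fun i j => if i.val < 2 ∨ j.val < 2 then A i j else 0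

lemma xiM_apply {n : ℕ} (a b i j : Fin n) :
    xiM a b i j = (if a = i ∧ b = j then (1:ℝ) else 0) - (if b = i ∧ a = j then 1 else 0) := by
  simp [xiM, Matrix.single]

lemma xiM_entry_zero {n : ℕ} (b j i k : Fin n) (hb : b.val < 2)
    (hi : 2 ≤ i.val) (hk : 2 ≤ k.val) : xiM b j i k = 0 := by
  rw [xiM_apply]
  simp only [Fin.ext_iff]
  split_ifs <;> first | omega | norm_num

lemma projV_eq_self {n : ℕ} (A : Matrix (Fin n) (Fin n) ℝ)
    (h : ∀ i j : Fin n, 2 ≤ i.val → 2 ≤ j.val → A i j = 0) : projV n A = A := by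
  ext i j
  unfold projV
  simp only [of_apply]
  split_ifs with h1
  · rfl
  · push_neg at h1
    exact (h i j h1.1 h1.2).symm

lemma lie1 {n : ℕ} (a b c : Fin n) (hab : a ≠ b) (hac : a ≠ c) (hbc : b ≠ c) :
    ⁅xiM a b, xiM a c⁆ = -(xiM b c) := by
  simp only [Ring.lie_def, xiM, sub_mul, mul_sub, mul_one,
    Matrix.single_mul_single_same, Matrix.single_mul_single_of_ne,
    hab, hac, hbc, hab.symm, hac.symm, hbc.symm, Ne, not_false_iff]
  abel

lemma lie2 {n : ℕ} (a b c : Fin n) (hab : a ≠ b) (hac : a ≠ c) (hbc : b ≠ c) :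
    ⁅xiM a b, xiM b c⁆ = xiM a c := by
  simp only [Ring.lie_def, xiM, sub_mul, mul_sub, mul_one,
    Matrix.single_mul_single_same, Matrix.single_mul_single_of_ne,
    hab, hac, hbc, hab.symm, hac.symm, hbc.symm, Ne, not_false_iff]
  abel

lemma lie3 {n : ℕ} (a b c : Fin n) (hab : a ≠ b) (hac : a ≠ c) (hbc : b ≠ c) :
    ⁅xiM a c, xiM b c⁆ = -(xiM a b) := by
  simp only [Ring.lie_def, xiM, sub_mul, mul_sub, mul_one,
    Matrix.single_mul_single_same, Matrix.single_mul_single_of_ne,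
    hab, hac, hbc, hab.symm, hac.symm, hbc.symm, Ne, not_false_iff]
  abel

lemma lie0 {n : ℕ} (a b c d : Fin n) (hac : a ≠ c) (had : a ≠ d) (hbc : b ≠ c) (hbd : b ≠ d) :
    ⁅xiM a b, xiM c d⁆ = 0 := by
  simp only [Ring.lie_def, xiM, sub_mul, mul_sub, mul_one,
    Matrix.single_mul_single_of_ne,
    hac, had, hbc, hbd, hac.symm, had.symm, hbc.symm, hbd.symm, Ne, not_false_iff]
  abel

lemma mat_smul_lie {n : ℕ} (t : ℝ) (x m : Matrix (Fin n) (Fin n) ℝ) : ⁅t • x, m⁆ = t • ⁅x, m⁆ := by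
  simp only [Ring.lie_def, Matrix.smul_mul, Matrix.mul_smul, smul_sub]

lemma mat_lie_smul {n : ℕ} (t : ℝ) (x m : Matrix (Fin n) (Fin n) ℝ) : ⁅x, t • m⁆ = t • ⁅x, m⁆ := by
  simp only [Ring.lie_def, Matrix.smul_mul, Matrix.mul_smul, smul_sub]

lemma lie_sum' {n : ℕ} (x : Matrix (Fin n) (Fin n) ℝ) (s : Finset (Fin n))
    (f : Fin n → Matrix (Fin n) (Fin n) ℝ) :
    ⁅x, ∑ j ∈ s, f j⁆ = ∑ j ∈ s, ⁅x, f j⁆ := by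
  simp only [Ring.lie_def, Finset.mul_sum, Finset.sum_mul, Finset.sum_sub_distrib]

lemma sum_lie' {n : ℕ} (x : Matrix (Fin n) (Fin n) ℝ) (s : Finset (Fin n))
    (f : Fin n → Matrix (Fin n) (Fin n) ℝ) :
    ⁅∑ j ∈ s, f j, x⁆ = ∑ j ∈ s, ⁅f j, x⁆ := by
  simp only [Ring.lie_def, Finset.mul_sum, Finset.sum_mul, Finset.sum_sub_distrib]

lemma key {n : ℕ} (b : Fin n) (hb : b.val < 2) (c : Fin n → ℝ) :
    (∑ j ∈ Finset.univ.filter (fun j : Fin n => 2 ≤ j.val), c j • xiM b j) = 0 ↔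
      ∀ j : Fin n, 2 ≤ j.val → c j = 0 := by
  constructor
  · intro h j hj
    have hjb : j ≠ b := by intro h'; subst h'; omega
    have h2 := congrFun (congrFun h b) j
    rw [Matrix.sum_apply, Finset.sum_eq_single j] at h2
    · simpa [Matrix.smul_apply, xiM_apply, hjb] using h2
    · intro k hk hkj
      simp only [Finset.mem_filter] at hk
      have hkj' : k.val ≠ j.val := fun h' => hkj (Fin.ext h')
      rw [Matrix.smul_apply, xiM_apply]
      simp only [Fin.ext_iff]
      split_ifs <;> first | omega | norm_num
    · intro hj'
      exact absurd (Finset.mem_filter.mpr ⟨Finset.mem_univ j, hj⟩) hj'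
  · intro h
    refine Finset.sum_eq_zero fun j hj => ?_
    simp only [Finset.mem_filter] at hj
    rw [h j hj.2, zero_smul]

lemma single_zero_iff {n : ℕ} (hn : 2 ≤ n) (c : ℝ) :
    c • xiM (⟨0, Nat.lt_of_lt_of_le Nat.zero_lt_two hn⟩ : Fin n) ⟨1, Nat.lt_of_lt_of_le Nat.one_lt_two hn⟩ = 0 ↔ c = 0 := by
  constructor
  · intro h
    have h2 := congrFun (congrFun h ⟨0, by omega⟩) ⟨1, by omega⟩
    simpa [Matrix.smul_apply, xiM_apply, Fin.ext_iff] using h2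
  · intro h; rw [h, zero_smul]


theorem stmt6 (n : ℕ) (hn : 2 ≤ n) (a12 : ℝ) (a1 a2 : Fin n → ℝ) :
    let i0 : Fin n := ⟨0, by omega⟩
    let i1 : Fin n := ⟨1, by omega⟩
    let X12 := a12 • xiM i0 i1
    let X13 := ∑ j ∈ Finset.univ.filter (fun j : Fin n => 2 ≤ j.val),
      a1 j • xiM i0 j
    let X23 := ∑ j ∈ Finset.univ.filter (fun j : Fin n => 2 ≤ j.val),
      a2 j • xiM i1 j
    (projV n ⁅X12, X13⁆ = 0 ∧ projV n ⁅X12, X23⁆ = 0 ∧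
        projV n ⁅X13, X23⁆ = 0) ↔
      ((∀ j : Fin n, 2 ≤ j.val → a12 * a1 j = 0 ∧ a12 * a2 j = 0) ∧
        ∑ j ∈ Finset.univ.filter (fun j : Fin n => 2 ≤ j.val),
          a1 j * a2 j = 0) := by
  intro i0 i1 X12 X13 X23
  have hS : True := trivial
  have h01 : i0 ≠ i1 := by simp [i0, i1, Fin.ext_iff]
  have h0S : ∀ j ∈ Finset.univ.filter (fun j : Fin n => 2 ≤ j.val), i0 ≠ j := by
    intro j hj
    simp only [Finset.mem_filter] at hj
    simp only [i0, Fin.ne_iff_vne]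
    omega
  have h1S : ∀ j ∈ Finset.univ.filter (fun j : Fin n => 2 ≤ j.val), i1 ≠ j := by
    intro j hj
    simp only [Finset.mem_filter] at hj
    simp only [i1, Fin.ne_iff_vne]
    omega
  -- the three brackets
  have hb1 : ⁅X12, X13⁆ = ∑ j ∈ Finset.univ.filter (fun j : Fin n => 2 ≤ j.val), (-(a12 * a1 j)) • xiM i1 j := by
    simp only [X12, X13]
    rw [lie_sum']
    refine Finset.sum_congr rfl fun j hj => ?_
    rw [mat_smul_lie, mat_lie_smul, lie1 i0 i1 j h01 (h0S j hj) (h1S j hj),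
      smul_smul, smul_neg, ← neg_smul]
  have hb2 : ⁅X12, X23⁆ = ∑ j ∈ Finset.univ.filter (fun j : Fin n => 2 ≤ j.val), (a12 * a2 j) • xiM i0 j := by
    simp only [X12, X23]
    rw [lie_sum']
    refine Finset.sum_congr rfl fun j hj => ?_
    rw [mat_smul_lie, mat_lie_smul, lie2 i0 i1 j h01 (h0S j hj) (h1S j hj), smul_smul]
  have hb3 : ⁅X13, X23⁆ = (-(∑ j ∈ Finset.univ.filter (fun j : Fin n => 2 ≤ j.val), a1 j * a2 j)) • xiM i0 i1 := by
    simp only [X13, X23]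
    rw [sum_lie']
    simp only [lie_sum']
    have step : ∀ i ∈ Finset.univ.filter (fun j : Fin n => 2 ≤ j.val), (∑ j ∈ Finset.univ.filter (fun j : Fin n => 2 ≤ j.val), ⁅a1 i • xiM i0 i, a2 j • xiM i1 j⁆)
        = (-(a1 i * a2 i)) • xiM i0 i1 := by
      intro i hi
      rw [Finset.sum_eq_single i]
      · rw [mat_smul_lie, mat_lie_smul, lie3 i0 i1 i h01 (h0S i hi) (h1S i hi),
          smul_smul, smul_neg, ← neg_smul]
      · intro j hj hji
        rw [mat_smul_lie, mat_lie_smul,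
          lie0 i0 i i1 j h01 (h0S j hj) (Ne.symm (h1S i hi)) (Ne.symm hji),
          smul_zero, smul_zero]
      · intro h; exact absurd hi h
    rw [Finset.sum_congr rfl step, ← Finset.sum_smul, ← Finset.sum_neg_distrib]
  -- projV fixes all three
  have sup1 : ∀ b : Fin n, b.val < 2 → ∀ (c : Fin n → ℝ),
      projV n (∑ j ∈ Finset.univ.filter (fun j : Fin n => 2 ≤ j.val), c j • xiM b j) = ∑ j ∈ Finset.univ.filter (fun j : Fin n => 2 ≤ j.val), c j • xiM b j := by
    intro b hb c
    refine projV_eq_self _ fun i k hi hk => ?_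
    rw [Matrix.sum_apply]
    refine Finset.sum_eq_zero fun j hj => ?_
    rw [Matrix.smul_apply, xiM_entry_zero b j i k hb hi hk, smul_zero]
  have sup3 : projV n ((-(∑ j ∈ Finset.univ.filter (fun j : Fin n => 2 ≤ j.val), a1 j * a2 j)) • xiM i0 i1)
      = (-(∑ j ∈ Finset.univ.filter (fun j : Fin n => 2 ≤ j.val), a1 j * a2 j)) • xiM i0 i1 := by
    refine projV_eq_self _ fun i k hi hk => ?_
    rw [Matrix.smul_apply, xiM_entry_zero i0 i1 i k (by simp [i0]) hi hk, smul_zero]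
  rw [hb1, hb2, hb3, sup1 i1 (by simp [i1]) _, sup1 i0 (by simp [i0]) _, sup3,
    key i1 (by simp [i1]) _, key i0 (by simp [i0]) _, single_zero_iff hn, neg_eq_zero]
  simp only [neg_eq_zero]
  constructor
  · rintro ⟨u, v, w⟩
    exact ⟨fun j hj => ⟨u j hj, v j hj⟩, w⟩
  · rintro ⟨u, w⟩
    exact ⟨fun j hj => (u j hj).1, fun j hj => (u j hj).2, w⟩
end

section
/- In so(n) with m = m_{12} ⊕ m_{13} ⊕ m_{23} as in the Stiefel manifold V_2 R^n, any vector of the form X = a_{13}ξ_{13} + Σ_{j=4}^n a_{2j}ξ_{2j} (i.e., with a_{12} = 0, a_{1j} = 0 for j ≥ 4, and a_{23} = 0) satisfies [X, ΛX]_m = 0 for every operator Λ = λ_{12} Id_{m_{12}} + λ_{13} Id_{m_{13}} + λ_{23} Id_{m_{23}} with positive λ's; that is, X is an equigeodesic vector. -/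
open Matrix

lemma xiM_mul_disjoint {n : ℕ} (a b c d : Fin n) (hac : a ≠ c) (had : a ≠ d)
    (hbc : b ≠ c) (hbd : b ≠ d) : xiM a b * xiM c d = 0 := by
  simp [xiM, sub_mul, mul_sub, Matrix.single_mul_single_of_ne, hbc, hbd, hac, had]

lemma projV_zero (n : ℕ) : projV n 0 = 0 := by
  ext i j
  simp [projV]

/-- Any vector `X = a₁₃ ξ₁₃ + Σ_{j=4}^n a_{2j} ξ_{2j}` is an equigeodesic
vector on the Stiefel manifold `V₂ℝⁿ`: `[X, ΛX]_m = 0` for every invariant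
metric `Λ = λ₁₂ Id_{m₁₂} + λ₁₃ Id_{m₁₃} + λ₂₃ Id_{m₂₃}` with positive `λ`'s. -/
theorem stmt7 (n : ℕ) (hn : 3 ≤ n) (a13 : ℝ) (a2 : Fin n → ℝ) :
    let i0 : Fin n := ⟨0, by omega⟩
    let i1 : Fin n := ⟨1, by omega⟩
    let i2 : Fin n := ⟨2, by omega⟩
    let X12 : Matrix (Fin n) (Fin n) ℝ := 0
    let X13 := a13 • xiM i0 i2
    let X23 := ∑ j ∈ Finset.univ.filter (fun j : Fin n => 3 ≤ j.val),
      a2 j • xiM i1 j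
    ∀ l12 l13 l23 : ℝ, 0 < l12 → 0 < l13 → 0 < l23 →
      projV n ⁅X12 + X13 + X23, l12 • X12 + l13 • X13 + l23 • X23⁆ = 0 := by
  intro i0 i1 i2 X12 X13 X23 l12 l13 l23 _ _ _
  letI : LieRing (Matrix (Fin n) (Fin n) ℝ) := LieRing.ofAssociativeRing
  have hb : ⁅X13, X23⁆ = 0 := by
    show X13 * X23 - X23 * X13 = 0
    have h1 : X13 * X23 = 0 := by
      rw [Finset.mul_sum]
      refine Finset.sum_eq_zero fun j hj => ?_
      rw [Finset.mem_filter] at hj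
      have hj3 := hj.2
      rw [smul_mul_assoc, mul_smul_comm,
        xiM_mul_disjoint i0 i2 i1 j (by simp [i0, i1, Fin.ext_iff])
          (Fin.ne_of_val_ne (by show (0:ℕ) ≠ j.val; omega))
          (by simp [i2, i1, Fin.ext_iff])
          (Fin.ne_of_val_ne (by show (2:ℕ) ≠ j.val; omega))]
      simp
    have h2 : X23 * X13 = 0 := by
      rw [Finset.sum_mul]
      refine Finset.sum_eq_zero fun j hj => ?_
      rw [Finset.mem_filter] at hj
      have hj3 := hj.2
      rw [smul_mul_assoc, mul_smul_comm,
        xiM_mul_disjoint i1 j i0 i2 (by simp [i0, i1, Fin.ext_iff])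
          (by simp [i1, i2, Fin.ext_iff])
          (Fin.ne_of_val_ne (by show j.val ≠ (0:ℕ); omega))
          (Fin.ne_of_val_ne (by show j.val ≠ (2:ℕ); omega))]
      simp
    rw [h1, h2, sub_zero]
  have : ⁅X12 + X13 + X23, l12 • X12 + l13 • X13 + l23 • X23⁆ = 0 := by
    simp only [X12, add_zero, zero_add, smul_zero, lie_add, add_lie, lie_smul]
    have hb' : ⁅X23, X13⁆ = 0 := (lie_skew X23 X13).symm.trans (by rw [hb, neg_zero])
    rw [lie_self, lie_self, hb, hb']
    simp
  rw [this, projV_zero]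
end

section
/- For the sphere S^{2n+1} = U(n+1)/U(n): let m_1 = span{f_{11}} and m_2 = span{e_{1j}, f_{1j} : 2 ≤ j ≤ n+1} inside u(n+1), where e_{1j} = E_{1j} - E_{j1} and f_{1j} = i(E_{1j} + E_{j1}), f_{11} = 2i·E_{11}. Then for X_1 = α·f_{11} ∈ m_1 and X_2 = Σ_{j=2}^{n+1}(α_j e_{1j} + β_j f_{1j}) ∈ m_2, the projection of [X_1, X_2] onto m := m_1 ⊕ m_2 (along the embedded u(n)) vanishes if and only if α = 0 or all α_j = β_j = 0. Consequently, the only equigeodesic vectors X = X_1 + X_2 are the trivial ones lying entirely in m_1 or entirely in m_2. -/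
open Matrix

/-- `e_{1j} = E_{1j} - E_{j1}` in the (n+1)×(n+1) complex matrices
(0-based: row/column 0 plays the role of index 1). -/
noncomputable def eS {n : ℕ} (j : Fin (n + 1)) :
    Matrix (Fin (n + 1)) (Fin (n + 1)) ℂ :=
  Matrix.single 0 j 1 - Matrix.single j 0 1

/-- `f_{1j} = i(E_{1j} + E_{j1})`; in particular `f_{11} = 2i·E_{11}`. -/
noncomputable def fS {n : ℕ} (j : Fin (n + 1)) :
    Matrix (Fin (n + 1)) (Fin (n + 1)) ℂ :=
  Matrix.single 0 j Complex.I + Matrix.single j 0 Complex.I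

/-- Projection of `u(n+1)` onto `m = m₁ ⊕ m₂` (entries in the first row or
column) along the embedded `u(n)` (the lower-right n×n block). -/
noncomputable def projS {n : ℕ} (A : Matrix (Fin (n + 1)) (Fin (n + 1)) ℂ) :
    Matrix (Fin (n + 1)) (Fin (n + 1)) ℂ :=
  Matrix.of fun i j => if i = 0 ∨ j = 0 then A i j else 0

lemma X2_apply {n : ℕ} (av bv : Fin (n + 1) → ℝ) (i k : Fin (n + 1)) :
  (∑ j ∈ Finset.univ.filter (fun j : Fin (n + 1) => j ≠ 0),
      (av j • eS j + bv j • fS j)) i k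
  = if i = 0 then (if k = 0 then 0 else ((av k : ℂ) + bv k * Complex.I))
    else if k = 0 then (-(av i : ℂ) + bv i * Complex.I) else 0 := by
  simp only [Matrix.sum_apply, Matrix.add_apply, Matrix.smul_apply, eS, fS,
    Matrix.sub_apply, Matrix.single, Matrix.of_apply, smul_eq_mul]
  by_cases hi : i = 0 <;> by_cases hk : k = 0 <;>
    simp [hi, hk, eq_comm, Finset.sum_ite_eq, Finset.sum_ite_eq',
      Finset.sum_ite_of_false, mul_comm] <;> ring_nf
    <;> simp [Finset.sum_add_distrib, Finset.sum_ite_eq, Finset.sum_ite_eq',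
       Finset.mem_filter, hi, hk, mul_comm]

lemma X1_apply {n : ℕ} (α : ℝ) (i k : Fin (n + 1)) :
    (α • fS (0 : Fin (n + 1))) i k
      = if i = 0 then (if k = 0 then 2 * α * Complex.I else 0) else 0 := by
  simp only [Matrix.smul_apply, fS, Matrix.add_apply, Matrix.single,
    Matrix.of_apply, smul_eq_mul]
  by_cases hi : i = 0 <;> by_cases hk : k = 0 <;> simp [hi, hk, eq_comm] <;> ring

lemma br_apply {n : ℕ} (α : ℝ) (av bv : Fin (n + 1) → ℝ) (i k : Fin (n + 1)) :
    (⁅α • fS (0 : Fin (n + 1)),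
      ∑ j ∈ Finset.univ.filter (fun j : Fin (n + 1) => j ≠ 0),
        (av j • eS j + bv j • fS j)⁆) i k
    = if i = 0 then (if k = 0 then 0
        else 2 * α * Complex.I * ((av k : ℂ) + bv k * Complex.I))
      else if k = 0 then 2 * α * Complex.I * ((av i : ℂ) - bv i * Complex.I)
      else 0 := by
  rw [Ring.lie_def]
  rw [Matrix.sub_apply, Matrix.mul_apply, Matrix.mul_apply]
  simp only [X1_apply, X2_apply, ite_mul, mul_ite, zero_mul, mul_zero]
  by_cases hi : i = 0 <;> by_cases hk : k = 0
  · subst hi; subst hk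
    simp only [if_pos rfl, ite_true, if_true]
    refine sub_eq_zero.mpr (Finset.sum_congr rfl fun x _ => ?_)
    by_cases hx : x = 0 <;> simp [hx]
  all_goals simp [hi, hk, Finset.sum_ite_eq, Finset.sum_ite_eq']
  all_goals ring

lemma projS_smul {n : ℕ} (c : ℝ) (A : Matrix (Fin (n + 1)) (Fin (n + 1)) ℂ) :
    projS (c • A) = c • projS A := by
  ext i j
  simp only [projS, Matrix.of_apply, Matrix.smul_apply]
  split_ifs <;> simp

lemma projS_zero {n : ℕ} : projS (0 : Matrix (Fin (n + 1)) (Fin (n + 1)) ℂ) = 0 := by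
  ext i j
  simp [projS]


/-- On `S^{2n+1} = U(n+1)/U(n)`: the projection onto `m` of `[X₁, X₂]`
vanishes iff `α = 0` or all the coefficients of `X₂` vanish; consequently the
only equigeodesic vectors `X = X₁ + X₂` are those lying entirely in `m₁`
or entirely in `m₂`. -/
theorem stmt13 (n : ℕ) (α : ℝ) (av bv : Fin (n + 1) → ℝ) :
    let X1 := α • fS (0 : Fin (n + 1))
    let X2 := ∑ j ∈ Finset.univ.filter (fun j : Fin (n + 1) => j ≠ 0),
      (av j • eS j + bv j • fS j)
    (projS ⁅X1, X2⁆ = 0 ↔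
      (α = 0 ∨ ∀ j : Fin (n + 1), j ≠ 0 → av j = 0 ∧ bv j = 0)) ∧
    ((∀ l1 l2 : ℝ, 0 < l1 → 0 < l2 →
        projS ⁅X1 + X2, l1 • X1 + l2 • X2⁆ = 0) ↔
      (X1 = 0 ∨ X2 = 0)) := by
  intro X1 X2
  have e1 : X1 = α • fS (0 : Fin (n + 1)) := rfl
  have e2 : X2 = ∑ j ∈ Finset.univ.filter (fun j : Fin (n + 1) => j ≠ 0),
      (av j • eS j + bv j • fS j) := rfl
  have key : projS ⁅X1, X2⁆ = 0 ↔
      (α = 0 ∨ ∀ j : Fin (n + 1), j ≠ 0 → av j = 0 ∧ bv j = 0) := by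
    rw [e1, e2]
    constructor
    · intro h
      by_cases hα : α = 0
      · exact Or.inl hα
      · refine Or.inr fun j hj => ?_
        have h0 := congrFun (congrFun h 0) j
        simp only [projS, Matrix.of_apply, Matrix.zero_apply, eq_self_iff_true,
          true_or, if_true] at h0
        rw [br_apply] at h0
        simp only [if_pos rfl, if_neg hj, ite_true] at h0
        have h1 : ((av j : ℂ) + bv j * Complex.I) = 0 := by
          have h2 : (2 * (α : ℂ) * Complex.I) ≠ 0 := by
            simp [hα, Complex.I_ne_zero]
          exact (mul_eq_zero.mp h0).resolve_left h2
        rw [Complex.ext_iff] at h1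
        simp only [Complex.add_re, Complex.ofReal_re, Complex.mul_re,
          Complex.ofReal_im, Complex.I_re, Complex.I_im, Complex.add_im,
          Complex.mul_im, Complex.zero_re, Complex.zero_im] at h1
        constructor <;> [nlinarith [h1.1]; nlinarith [h1.2]]
    · intro h
      obtain hα | h := h
      · ext i j
        simp only [projS, Matrix.of_apply, Matrix.zero_apply]
        by_cases hi : i = 0 <;> by_cases hj : j = 0 <;>
          simp [br_apply, hi, hj, hα, Ring.lie_def]
      · ext i j
        simp only [projS, Matrix.of_apply, Matrix.zero_apply]
        by_cases hi : i = 0 <;> by_cases hj : j = 0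
        · simp [br_apply, hi, hj]
        · simp [br_apply, hi, hj, (h j hj).1, (h j hj).2]
        · simp [br_apply, hi, hj, (h i hi).1, (h i hi).2]
        · simp [br_apply, hi, hj]
  refine ⟨key, ?_⟩
  have hX1zero : X1 = 0 ↔ α = 0 := by
    rw [e1]
    constructor
    · intro h
      have h0 := congrFun (congrFun h 0) 0
      rw [X1_apply] at h0
      simp [Complex.I_ne_zero] at h0
      exact h0
    · intro h
      ext i k
      rw [X1_apply]
      simp [h]
  have hX2zero : X2 = 0 ↔ ∀ j : Fin (n + 1), j ≠ 0 → av j = 0 ∧ bv j = 0 := by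
    rw [e2]
    constructor
    · intro h j hj
      have h0 := congrFun (congrFun h 0) j
      rw [X2_apply] at h0
      simp only [if_pos rfl, if_neg hj, ite_true, Matrix.zero_apply] at h0
      rw [Complex.ext_iff] at h0
      simp only [Complex.add_re, Complex.ofReal_re, Complex.mul_re,
        Complex.ofReal_im, Complex.I_re, Complex.I_im, Complex.add_im,
        Complex.mul_im, Complex.zero_re, Complex.zero_im] at h0
      constructor <;> [nlinarith [h0.1]; nlinarith [h0.2]]
    · intro h
      ext i k
      rw [X2_apply]
      by_cases hi : i = 0 <;> by_cases hk : k = 0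
      · simp [hi, hk]
      · simp [hi, hk, (h k hk).1, (h k hk).2]
      · simp [hi, hk, (h i hi).1, (h i hi).2]
      · simp [hi, hk]
  have hbil : ∀ l1 l2 : ℝ, ⁅X1 + X2, l1 • X1 + l2 • X2⁆
      = (l2 - l1) • ⁅X1, X2⁆ := by
    intro l1 l2
    rw [Ring.lie_def, Ring.lie_def]
    simp only [add_mul, mul_add, Matrix.mul_smul, Matrix.smul_mul]
    module
  constructor
  · intro h
    have h12 := h 1 2 one_pos two_pos
    rw [hbil, projS_smul] at h12
    norm_num at h12
    rcases key.mp h12 with hα | h'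
    · exact Or.inl (hX1zero.mpr hα)
    · exact Or.inr (hX2zero.mpr h')
  · rintro (h | h) l1 l2 _ _
    · rw [hbil, h]
      simp [projS_zero, Ring.lie_def]
    · rw [hbil, h]
      simp [projS_zero, Ring.lie_def]
end
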